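/- arXiv:1406.0013 — 3 statements merged into one kernel-verified Lean document; each statement's English description precedes it below -/
import Mathlib

section
/- Fix x ∈ ℝ^d. Then lim_{ε→0⁺} ε^{−1}·∫ a_ε(x,y)·f(y) dy = m₂·( w(x)·∇f(x) + ½·f(x)·(∇·w)(x) ); that is, the antisymmetric part of the kernel contributes exactly the advection term and the divergence term at first order in ε. -/
open MeasureTheory Filter Set
open scoped InnerProductSpace Topology

noncomputable section

/-- Euclidean space `ℝ^d`. -/
abbrev E (d : ℕ) := EuclideanSpace ℝ (Fin d)

/-- The rescaled symmetric kernel `h_ε(x,y) = ε^{-d/2} h(‖y-x‖²/ε)`. -/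
def hker (d : ℕ) (h : ℝ → ℝ) (ε : ℝ) (x y : E d) : ℝ :=
  ε ^ (-(d : ℝ) / 2) * h (‖y - x‖ ^ 2 / ε)

/-- The Euclidean Laplacian `Δ f(x) = ∑ᵢ ∂²f/∂xᵢ²`. -/
def lap {d : ℕ} (f : E d → ℝ) (x : E d) : ℝ :=
  ∑ i, fderiv ℝ (fun z => fderiv ℝ f z (EuclideanSpace.single i 1)) x (EuclideanSpace.single i 1)

/-- The divergence `∇·w (x) = ∑ᵢ ∂wᵢ/∂xᵢ`. -/
def divg {d : ℕ} (w : E d → E d) (x : E d) : ℝ :=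
  ∑ i, fderiv ℝ w x (EuclideanSpace.single i 1) i

/-- The antisymmetric kernel part `a_ε(x,y) = ½(w(x)+w(y))·(y-x)·h_ε(x,y)`. -/
def aker (d : ℕ) (h : ℝ → ℝ) (w : E d → E d) (ε : ℝ) (x y : E d) : ℝ :=
  ((1 : ℝ) / 2) * ⟪w x + w y, y - x⟫_ℝ * hker d h ε x y

set_option maxHeartbeats 1000000

lemma gauss_int (d : ℕ) {a : ℝ} (ha : 0 < a) :
    Integrable (fun u : E d => Real.exp (-a * ‖u‖ ^ 2)) := by
  have h := (GaussianFourier.integrable_cexp_neg_mul_sq_norm_add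
    (b := (a : ℂ)) (by simpa using ha) 0 (0 : E d)).norm
  refine h.congr (Eventually.of_forall fun v => ?_)
  have hc : (-(a:ℂ) * (‖v‖:ℂ) ^ 2 + 0 * ((⟪(0:E d), v⟫_ℝ : ℝ) : ℂ))
      = ((-a * ‖v‖^2 : ℝ) : ℂ) := by push_cast; ring
  simp only [hc, Complex.norm_exp, Complex.ofReal_re]

lemma pow_le_exp_aux {a t : ℝ} (ha : 0 < a) (ht : 0 ≤ t) (k : ℕ) :
    t ^ k ≤ (k.factorial * a⁻¹ ^ k) * Real.exp (a * t) := by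
  have h2 : (a*t)^k / k.factorial ≤ Real.exp (a*t) :=
    Real.pow_div_factorial_le_exp (x := a*t) (by positivity) k
  rw [mul_pow] at h2
  have hk : (0:ℝ) < k.factorial := by positivity
  calc t ^ k = (k.factorial * a⁻¹ ^ k) * (a ^ k * t ^ k / k.factorial) := by
        have hinv : a⁻¹ ^ k * a ^ k = 1 := by rw [← mul_pow, inv_mul_cancel₀ ha.ne', one_pow]
        field_simp; linear_combination (-(t^k)) * hinv
    _ ≤ (k.factorial * a⁻¹ ^ k) * Real.exp (a * t) :=
        mul_le_mul_of_nonneg_left h2 (by positivity)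

lemma poly_gauss_int (d k : ℕ) {a : ℝ} (ha : 0 < a) :
    Integrable (fun u : E d => ‖u‖ ^ k * Real.exp (-a * ‖u‖ ^ 2)) := by
  have h2 : (0:ℝ) < a/2 := by linarith
  set B : ℝ := (k.factorial * (a/2)⁻¹ ^ k) + 1 with hB
  have hBpos : (0:ℝ) < B := by positivity
  refine ((gauss_int d h2).const_mul B).mono'
    (((continuous_norm.pow k).mul
      ((continuous_const.mul (continuous_norm.pow 2)).rexp)).aestronglyMeasurable)
    (Eventually.of_forall fun u => ?_)
  have hexp1 : (1:ℝ) ≤ Real.exp ((a/2) * ‖u‖^2) := by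
    rw [← Real.exp_zero]; exact Real.exp_le_exp.2 (by positivity)
  have hb1 : ‖u‖ ^ k ≤ B * Real.exp ((a/2) * ‖u‖^2) := by
    rcases le_total (‖u‖) 1 with hu | hu
    · calc ‖u‖ ^ k ≤ 1 := pow_le_one₀ (norm_nonneg u) hu
        _ ≤ B * Real.exp ((a/2) * ‖u‖^2) := by
            nlinarith [mul_pos (mul_pos (by positivity : (0:ℝ) < (k.factorial:ℝ))
              (pow_pos (inv_pos.2 h2) k)) (lt_of_lt_of_le one_pos hexp1),
              (by positivity : (0:ℝ) ≤ (k.factorial:ℝ) * (a/2)⁻¹ ^ k)]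
    · calc ‖u‖ ^ k ≤ ‖u‖ ^ (2*k) := pow_le_pow_right₀ hu (by omega)
        _ = (‖u‖^2) ^ k := by rw [← pow_mul]
        _ ≤ (k.factorial * (a/2)⁻¹ ^ k) * Real.exp ((a/2) * ‖u‖^2) :=
            pow_le_exp_aux h2 (by positivity) k
        _ ≤ B * Real.exp ((a/2) * ‖u‖^2) := by
            apply mul_le_mul_of_nonneg_right _ (Real.exp_pos _).le
            simp [hB]
  rw [norm_mul, norm_pow, norm_norm, Real.norm_eq_abs, abs_of_pos (Real.exp_pos _)]
  calc ‖u‖ ^ k * Real.exp (-a * ‖u‖ ^ 2)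
      ≤ (B * Real.exp ((a/2) * ‖u‖^2)) * Real.exp (-a * ‖u‖ ^ 2) :=
        mul_le_mul_of_nonneg_right hb1 (Real.exp_pos _).le
    _ = B * Real.exp (-(a/2) * ‖u‖ ^ 2) := by
        rw [mul_assoc, ← Real.exp_add]; ring_nf


lemma phi_int (d k : ℕ) {h : ℝ → ℝ} {C c : ℝ} (h_nonneg : ∀ u, 0 ≤ h u)
    (h_cont : Continuous h) (hc : 0 < c)
    (h_decay : ∀ u : ℝ, 0 ≤ u → h u ≤ C * Real.exp (-c * u)) :
    Integrable (fun u : E d => ‖u‖ ^ k * h (‖u‖ ^ 2)) := by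
  refine ((poly_gauss_int d k hc).const_mul C).mono'
    ((continuous_norm.pow k).mul (h_cont.comp (continuous_norm.pow 2))).aestronglyMeasurable
    (Eventually.of_forall fun u => ?_)
  rw [Real.norm_eq_abs, abs_mul, abs_of_nonneg (h_nonneg _),
    abs_of_nonneg (by positivity : (0:ℝ) ≤ ‖u‖ ^ k)]
  calc ‖u‖ ^ k * h (‖u‖ ^ 2) ≤ ‖u‖ ^ k * (C * Real.exp (-c * ‖u‖ ^ 2)) :=
      mul_le_mul_of_nonneg_left (h_decay _ (by positivity)) (by positivity)
    _ = C * (‖u‖ ^ k * Real.exp (-c * ‖u‖ ^ 2)) := by ring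

section
variable {d : ℕ} {h : ℝ → ℝ} {C c : ℝ}

lemma abs_coord_le_norm (u : E d) (i : Fin d) : |u i| ≤ ‖u‖ := by
  have h1 : ⟪EuclideanSpace.single i (1:ℝ), u⟫_ℝ = u i := by
    rw [EuclideanSpace.inner_single_left]; simp
  have h2 := abs_real_inner_le_norm (EuclideanSpace.single i (1:ℝ)) u
  rw [h1, EuclideanSpace.norm_single] at h2
  simpa using h2

-- integrand measurability helper
lemma cont_coord (i : Fin d) : Continuous (fun u : E d => u i) := by
  have : Continuous (fun u : E d => ⟪EuclideanSpace.single i (1:ℝ), u⟫_ℝ) :=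
    Continuous.inner continuous_const continuous_id
  refine this.congr fun u => ?_
  rw [EuclideanSpace.inner_single_left]; simp

lemma moment_offdiag (h_cont : Continuous h) {i j : Fin d} (hij : i ≠ j) :
    ∫ u : E d, u i * u j * h (‖u‖ ^ 2) = 0 := by
  classical
  set R : E d ≃ₗᵢ[ℝ] E d := LinearIsometryEquiv.piLpCongrRight 2
    (fun k : Fin d => if k = i then LinearIsometryEquiv.neg ℝ else
      LinearIsometryEquiv.refl ℝ ℝ) with hR
  have hRapp : ∀ (u : E d) (k : Fin d), R u k = if k = i then -u k else u k := by
    intro u k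
    have : R u k = (if k = i then LinearIsometryEquiv.neg ℝ else
        LinearIsometryEquiv.refl ℝ ℝ) (u k) := rfl
    rw [this, apply_ite (fun (e : ℝ ≃ₗᵢ[ℝ] ℝ) => e (u k))]
    simp
  have key := MeasureTheory.integral_comp R (fun u : E d => u i * u j * h (‖u‖ ^ 2))
  have heq : ∀ u : E d, (R u) i * (R u) j * h (‖R u‖ ^ 2)
      = -(u i * u j * h (‖u‖ ^ 2)) := by
    intro u
    rw [hRapp, hRapp, R.norm_map]
    simp [hij.symm]
  simp only [heq] at key
  rw [integral_neg] at key
  linarith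

lemma moment_diag (hd : 0 < d) (i : Fin d) :
    ∫ u : E d, u i * u i * h (‖u‖ ^ 2)
      = ∫ u : E d, (u ⟨0, hd⟩) ^ 2 * h (‖u‖ ^ 2) := by
  classical
  set z : Fin d := ⟨0, hd⟩
  set S : E d ≃ₗᵢ[ℝ] E d := LinearIsometryEquiv.piLpCongrLeft 2 ℝ ℝ (Equiv.swap i z) with hS
  have key := MeasureTheory.integral_comp S (fun u : E d => (u z) ^ 2 * h (‖u‖ ^ 2))
  have hSapp : ∀ u : E d, (S u) z = u i := by
    intro u
    have : S u z = u ((Equiv.swap i z).symm z) := rfl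
    rw [this, Equiv.symm_swap, Equiv.swap_apply_right]
  have heq : ∀ u : E d, ((S u) z) ^ 2 * h (‖S u‖ ^ 2) = u i * u i * h (‖u‖ ^ 2) := by
    intro u; rw [hSapp, S.norm_map]; ring_nf
  simp only [heq] at key
  exact key
end


section
variable {d : ℕ} {h : ℝ → ℝ} {C c : ℝ}

variable (h_nonneg : ∀ u, 0 ≤ h u) (h_cont : Continuous h) (hc : 0 < c)
  (h_decay : ∀ u : ℝ, 0 ≤ u → h u ≤ C * Real.exp (-c * u))

lemma hip (a b : E d) : ⟪a, b⟫_ℝ = ∑ i, a i * b i := by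
  simp [PiLp.inner_apply, RCLike.inner_apply]
  exact Finset.sum_congr rfl fun _ _ => mul_comm _ _

include h_nonneg h_cont hc h_decay in
lemma int_coord (i j : Fin d) :
    Integrable (fun u : E d => u i * u j * h (‖u‖ ^ 2)) := by
  refine (phi_int d 2 h_nonneg h_cont hc h_decay).mono'
    (((cont_coord i).mul (cont_coord j)).mul
      (h_cont.comp (continuous_norm.pow 2))).aestronglyMeasurable
    (Eventually.of_forall fun u => ?_)
  rw [Real.norm_eq_abs, abs_mul, abs_mul, abs_of_nonneg (h_nonneg _)]
  have hi := abs_coord_le_norm u i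
  have hj := abs_coord_le_norm u j
  have h0 := h_nonneg (‖u‖^2)
  have h3 : |u i| * |u j| ≤ ‖u‖ * ‖u‖ :=
    mul_le_mul hi hj (abs_nonneg _) (norm_nonneg _)
  calc |u i| * |u j| * h (‖u‖ ^ 2) ≤ (‖u‖ * ‖u‖) * h (‖u‖ ^ 2) :=
        mul_le_mul_of_nonneg_right h3 h0
    _ = ‖u‖ ^ 2 * h (‖u‖ ^ 2) := by ring

include h_nonneg h_cont hc h_decay in
lemma int_inner (v y : E d) :
    Integrable (fun u : E d => ⟪v, u⟫_ℝ * ⟪y, u⟫_ℝ * h (‖u‖ ^ 2)) := by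
  refine ((phi_int d 2 h_nonneg h_cont hc h_decay).const_mul (‖v‖ * ‖y‖)).mono'
    (((Continuous.inner continuous_const continuous_id).mul
      (Continuous.inner continuous_const continuous_id)).mul
      (h_cont.comp (continuous_norm.pow 2))).aestronglyMeasurable
    (Eventually.of_forall fun u => ?_)
  rw [Real.norm_eq_abs, abs_mul, abs_mul, abs_of_nonneg (h_nonneg _)]
  have h1 := abs_real_inner_le_norm v u
  have h2 := abs_real_inner_le_norm y u
  have h0 := h_nonneg (‖u‖^2)
  have h3 : |⟪v, u⟫_ℝ| * |⟪y, u⟫_ℝ| ≤ (‖v‖ * ‖u‖) * (‖y‖ * ‖u‖) :=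
    mul_le_mul h1 h2 (abs_nonneg _) (by positivity)
  calc |⟪v, u⟫_ℝ| * |⟪y, u⟫_ℝ| * h (‖u‖ ^ 2)
      ≤ ((‖v‖ * ‖u‖) * (‖y‖ * ‖u‖)) * h (‖u‖ ^ 2) :=
        mul_le_mul_of_nonneg_right h3 h0
    _ = ‖v‖ * ‖y‖ * (‖u‖ ^ 2 * h (‖u‖ ^ 2)) := by ring

include h_nonneg h_cont hc h_decay in
lemma moment_bilinear (hd : 0 < d) (v y : E d) :
    ∫ u : E d, ⟪v, u⟫_ℝ * ⟪y, u⟫_ℝ * h (‖u‖ ^ 2)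
      = (∫ u : E d, (u ⟨0, hd⟩) ^ 2 * h (‖u‖ ^ 2)) * ⟪v, y⟫_ℝ := by
  classical
  set M := ∫ u : E d, (u ⟨0, hd⟩) ^ 2 * h (‖u‖ ^ 2) with hM
  have expand : ∀ u : E d, ⟪v, u⟫_ℝ * ⟪y, u⟫_ℝ * h (‖u‖ ^ 2)
      = ∑ i, ∑ j, (v i * y j) * (u i * u j * h (‖u‖ ^ 2)) := by
    intro u
    rw [hip, hip, Finset.sum_mul_sum, Finset.sum_mul]
    refine Finset.sum_congr rfl fun i _ => ?_
    rw [Finset.sum_mul]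
    exact Finset.sum_congr rfl fun j _ => by ring
  rw [show (fun u : E d => ⟪v, u⟫_ℝ * ⟪y, u⟫_ℝ * h (‖u‖ ^ 2))
      = fun u => ∑ i, ∑ j, (v i * y j) * (u i * u j * h (‖u‖ ^ 2)) from funext expand]
  rw [integral_finset_sum _ (fun i _ => integrable_finset_sum _
    (fun j _ => ((int_coord h_nonneg h_cont hc h_decay i j).const_mul _)))]
  have : ∀ i : Fin d, ∫ u : E d, ∑ j, (v i * y j) * (u i * u j * h (‖u‖ ^ 2))
      = (v i * y i) * M := by
    intro i
    rw [integral_finset_sum _ (fun j _ => ((int_coord h_nonneg h_cont hc h_decay i j).const_mul _))]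
    rw [Finset.sum_eq_single i]
    · rw [integral_const_mul, moment_diag hd i, ← hM]
    · intro j _ hji
      rw [integral_const_mul, moment_offdiag h_cont (Ne.symm hji), mul_zero]
    · intro hi; exact absurd (Finset.mem_univ i) hi
  simp_rw [this]
  rw [hip, Finset.mul_sum]
  exact Finset.sum_congr rfl fun i _ => by ring

include h_nonneg h_cont hc h_decay in
lemma moment_quad (hd : 0 < d) (A : E d →L[ℝ] E d) :
    ∫ u : E d, ⟪A u, u⟫_ℝ * h (‖u‖ ^ 2)
      = (∫ u : E d, (u ⟨0, hd⟩) ^ 2 * h (‖u‖ ^ 2))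
          * ∑ i, A (EuclideanSpace.single i 1) i := by
  classical
  have hu : ∀ u : E d, u = ∑ j, u j • EuclideanSpace.single j (1:ℝ) := by
    intro u
    have := (EuclideanSpace.basisFun (Fin d) ℝ).sum_repr u
    simp only [EuclideanSpace.basisFun_repr, EuclideanSpace.basisFun_apply] at this
    exact this.symm
  have hdecomp : ∀ u : E d, ⟪A u, u⟫_ℝ
      = ∑ j, ⟪EuclideanSpace.single j (1:ℝ), u⟫_ℝ * ⟪A (EuclideanSpace.single j 1), u⟫_ℝ := by
    intro u
    calc ⟪A u, u⟫_ℝ = ⟪A (∑ j, u j • EuclideanSpace.single j (1:ℝ)), u⟫_ℝ := by rw [← hu]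
      _ = ∑ j, u j * ⟪A (EuclideanSpace.single j 1), u⟫_ℝ := by
          rw [map_sum, sum_inner]
          exact Finset.sum_congr rfl fun j _ => by rw [A.map_smul, real_inner_smul_left]
      _ = _ := by
          refine Finset.sum_congr rfl fun j _ => ?_
          rw [EuclideanSpace.inner_single_left]
          simp
  rw [show (fun u : E d => ⟪A u, u⟫_ℝ * h (‖u‖ ^ 2))
      = fun u => ∑ j, ⟪EuclideanSpace.single j (1:ℝ), u⟫_ℝ
          * ⟪A (EuclideanSpace.single j 1), u⟫_ℝ * h (‖u‖ ^ 2) from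
    funext fun u => by rw [hdecomp, Finset.sum_mul]]
  rw [integral_finset_sum _ (fun j _ => int_inner h_nonneg h_cont hc h_decay _ _)]
  rw [Finset.mul_sum]
  refine Finset.sum_congr rfl fun j _ => ?_
  rw [moment_bilinear h_nonneg h_cont hc h_decay hd]
  congr 1
  rw [EuclideanSpace.inner_single_left]
  simp
end


/-- The antisymmetric part contributes the advection and divergence
terms at first order:
`lim_{ε→0⁺} ε⁻¹ ∫ a_ε(x,y) f(y) dy = m₂ (w(x)·∇f(x) + ½ f(x) ∇·w(x))`. -/
theorem stmt2
    (d : ℕ) (hd : 0 < d)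
    (h : ℝ → ℝ) (h_nonneg : ∀ u, 0 ≤ h u) (h_cont : Continuous h)
    (C c : ℝ) (hC : 0 < C) (hc : 0 < c)
    (h_decay : ∀ u : ℝ, 0 ≤ u → h u ≤ C * Real.exp (-c * u))
    (m₀ m₂ : ℝ)
    (hm₀ : m₀ = ∫ u : E d, h (‖u‖ ^ 2))
    (hm₂ : m₂ = ∫ u : E d, (u ⟨0, hd⟩) ^ 2 * h (‖u‖ ^ 2))
    (hm₀_pos : 0 < m₀)
    (w : E d → E d) (hw : ContDiff ℝ (⊤ : ℕ∞) w)
    (hw_bdd : ∀ n : ℕ, ∃ M, ∀ x, ‖iteratedFDeriv ℝ n w x‖ ≤ M)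
    (f : E d → ℝ) (hf : ContDiff ℝ 3 f)
    (hf_bdd : ∀ n : ℕ, n ≤ 3 → ∃ M, ∀ x, ‖iteratedFDeriv ℝ n f x‖ ≤ M)
    (x : E d) :
    Tendsto (fun ε : ℝ => ε⁻¹ * ∫ y, aker d h w ε x y * f y) (𝓝[>] (0 : ℝ))
      (𝓝 (m₂ * (⟪w x, gradient f x⟫_ℝ + (1 / 2) * f x * divg w x))) := by
  classical
  have hd_fr : Module.finrank ℝ (E d) = d := finrank_euclideanSpace_fin
  -- uniform bounds
  obtain ⟨W0, hW0'⟩ := hw_bdd 0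
  have hW0 : ∀ y, ‖w y‖ ≤ W0 := fun y => by
    have := hW0' y; rwa [norm_iteratedFDeriv_zero] at this
  obtain ⟨W1, hW1'⟩ := hw_bdd 1
  have hW1 : ∀ (y : E d) (v : E d), ‖fderiv ℝ w y v‖ ≤ W1 * ‖v‖ := by
    intro y v
    have h1 : fderiv ℝ w y v = iteratedFDeriv ℝ 1 w y (fun _ => v) := by
      rw [iteratedFDeriv_one_apply]
    rw [h1]
    calc ‖iteratedFDeriv ℝ 1 w y (fun _ => v)‖
        ≤ ‖iteratedFDeriv ℝ 1 w y‖ * ∏ _i : Fin 1, ‖v‖ :=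
          (iteratedFDeriv ℝ 1 w y).le_opNorm _
      _ ≤ W1 * ‖v‖ := by
          simp only [Finset.prod_const, Finset.card_univ, Fintype.card_fin, pow_one]
          exact mul_le_mul_of_nonneg_right (hW1' y) (norm_nonneg v)
  obtain ⟨F0, hF0'⟩ := hf_bdd 0 (by norm_num)
  have hF0 : ∀ y, |f y| ≤ F0 := fun y => by
    have := hF0' y; rwa [norm_iteratedFDeriv_zero, Real.norm_eq_abs] at this
  obtain ⟨F1, hF1'⟩ := hf_bdd 1 (by norm_num)
  have hF1 : ∀ (y : E d) (v : E d), |fderiv ℝ f y v| ≤ F1 * ‖v‖ := by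
    intro y v
    have h1 : fderiv ℝ f y v = iteratedFDeriv ℝ 1 f y (fun _ => v) := by
      rw [iteratedFDeriv_one_apply]
    rw [h1, ← Real.norm_eq_abs]
    calc ‖iteratedFDeriv ℝ 1 f y (fun _ => v)‖
        ≤ ‖iteratedFDeriv ℝ 1 f y‖ * ∏ _i : Fin 1, ‖v‖ :=
          (iteratedFDeriv ℝ 1 f y).le_opNorm _
      _ ≤ F1 * ‖v‖ := by
          simp only [Finset.prod_const, Finset.card_univ, Fintype.card_fin, pow_one]
          exact mul_le_mul_of_nonneg_right (hF1' y) (norm_nonneg v)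
  have hW0nn : 0 ≤ W0 := le_trans (norm_nonneg _) (hW0 x)
  have hW1nn : 0 ≤ W1 := by
    have := hW1' x; exact le_trans (norm_nonneg _) this
  have hF0nn : 0 ≤ F0 := le_trans (abs_nonneg _) (hF0 x)
  have hF1nn : 0 ≤ F1 := by
    have := hF1' x; exact le_trans (norm_nonneg _) this
  have hwdiff : Differentiable ℝ w := hw.differentiable (by simp)
  have hfdiff : Differentiable ℝ f := hf.differentiable (by norm_num)
  have hwcont : Continuous w := hwdiff.continuous
  have hfcont : Continuous f := hfdiff.continuous
  set φ : E d → ℝ := fun u => h (‖u‖ ^ 2) with hφ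
  have φcont : Continuous φ := h_cont.comp (continuous_norm.pow 2)
  set g : ℝ → E d → ℝ :=
    fun s u => (1/2) * ⟪w x + w (x + s • u), u⟫_ℝ * f (x + s • u) with hg
  set g' : ℝ → E d → ℝ := fun t u => (1/2) * (⟪w x + w (x + t • u), u⟫_ℝ
      * (fderiv ℝ f (x + t • u)) u
      + ⟪(fderiv ℝ w (x + t • u)) u, u⟫_ℝ * f (x + t • u)) with hg'
  -- derivative in s
  have hasderiv : ∀ (t : ℝ) (u : E d), HasDerivAt (fun σ => g σ u) (g' t u) t := by
    intro t u
    have hline : HasDerivAt (fun σ : ℝ => x + σ • u) u t := by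
      simpa using ((hasDerivAt_id t).smul_const u).const_add x
    have hA : HasDerivAt (fun σ => w x + w (x + σ • u)) (fderiv ℝ w (x + t • u) u) t :=
      ((hwdiff (x + t • u)).hasFDerivAt.comp_hasDerivAt t hline).const_add (w x)
    have hB : HasDerivAt (fun σ => f (x + σ • u)) (fderiv ℝ f (x + t • u) u) t :=
      (hfdiff (x + t • u)).hasFDerivAt.comp_hasDerivAt t hline
    have hinner : HasDerivAt (fun σ => ⟪w x + w (x + σ • u), u⟫_ℝ)
        (⟪w x + w (x + t • u), (0 : E d)⟫_ℝ + ⟪fderiv ℝ w (x + t • u) u, u⟫_ℝ) t :=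
      HasDerivAt.inner ℝ hA (hasDerivAt_const t u)
    have hderiv_eq : g' t u = (1/2 * (⟪w x + w (x + t • u), (0:E d)⟫_ℝ
        + ⟪fderiv ℝ w (x + t • u) u, u⟫_ℝ)) * f (x + t • u)
        + (1/2 * ⟪w x + w (x + t • u), u⟫_ℝ) * (fderiv ℝ f (x + t • u)) u := by
      simp only [hg', inner_zero_right]
      ring
    rw [hderiv_eq]
    exact (hinner.const_mul ((1:ℝ)/2)).mul hB
  -- bound on derivative
  set K : ℝ := W0 * F1 + (1/2) * W1 * F0 with hK
  have hg'bound : ∀ (t : ℝ) (u : E d), |g' t u| ≤ K * ‖u‖ ^ 2 := by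
    intro t u
    have e1 : |⟪w x + w (x + t • u), u⟫_ℝ| ≤ (2 * W0) * ‖u‖ := by
      refine le_trans (abs_real_inner_le_norm _ _) ?_
      refine mul_le_mul_of_nonneg_right ?_ (norm_nonneg u)
      refine le_trans (norm_add_le _ _) ?_
      linarith [hW0 x, hW0 (x + t • u)]
    have e2 : |(fderiv ℝ f (x + t • u)) u| ≤ F1 * ‖u‖ := hF1 _ _
    have e3 : |⟪(fderiv ℝ w (x + t • u)) u, u⟫_ℝ| ≤ (W1 * ‖u‖) * ‖u‖ := by
      refine le_trans (abs_real_inner_le_norm _ _) ?_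
      exact mul_le_mul_of_nonneg_right (hW1 _ _) (norm_nonneg u)
    have e4 : |f (x + t • u)| ≤ F0 := hF0 _
    have habs : |g' t u| ≤ (1/2) * (|⟪w x + w (x + t • u), u⟫_ℝ|
        * |(fderiv ℝ f (x + t • u)) u|
        + |⟪(fderiv ℝ w (x + t • u)) u, u⟫_ℝ| * |f (x + t • u)|) := by
      rw [hg']
      rw [abs_mul, abs_of_pos (by norm_num : (0:ℝ) < 1/2)]
      refine mul_le_mul_of_nonneg_left ?_ (by norm_num)
      refine le_trans (abs_add_le _ _) ?_
      rw [abs_mul, abs_mul]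
    refine le_trans habs ?_
    have p1 : |⟪w x + w (x + t • u), u⟫_ℝ| * |(fderiv ℝ f (x + t • u)) u|
        ≤ ((2 * W0) * ‖u‖) * (F1 * ‖u‖) :=
      mul_le_mul e1 e2 (abs_nonneg _) (by positivity)
    have p2 : |⟪(fderiv ℝ w (x + t • u)) u, u⟫_ℝ| * |f (x + t • u)|
        ≤ ((W1 * ‖u‖) * ‖u‖) * F0 :=
      mul_le_mul e3 e4 (abs_nonneg _) (by positivity)
    calc (1/2) * (|⟪w x + w (x + t • u), u⟫_ℝ| * |(fderiv ℝ f (x + t • u)) u|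
        + |⟪(fderiv ℝ w (x + t • u)) u, u⟫_ℝ| * |f (x + t • u)|)
        ≤ (1/2) * (((2 * W0) * ‖u‖) * (F1 * ‖u‖) + ((W1 * ‖u‖) * ‖u‖) * F0) := by
          refine mul_le_mul_of_nonneg_left ?_ (by norm_num)
          exact add_le_add p1 p2
      _ = K * ‖u‖ ^ 2 := by rw [hK]; ring
  -- MVT
  have hMVT : ∀ (s : ℝ) (u : E d), |g s u - g 0 u| ≤ (K * ‖u‖ ^ 2) * |s| := by
    intro s u
    have := Convex.norm_image_sub_le_of_norm_hasDerivWithin_le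
      (f := fun σ => g σ u) (f' := fun σ => g' σ u) (s := Set.univ)
      (fun t _ => (hasderiv t u).hasDerivWithinAt)
      (fun t _ => hg'bound t u) convex_univ (Set.mem_univ 0) (Set.mem_univ s)
    simpa using this
  -- pointwise bound on g
  have hgbound : ∀ (s : ℝ) (u : E d), |g s u| ≤ (W0 * F0) * ‖u‖ := by
    intro s u
    rw [hg, abs_mul, abs_mul, abs_of_pos (by norm_num : (0:ℝ) < 1/2)]
    have e1 : |⟪w x + w (x + s • u), u⟫_ℝ| ≤ (2 * W0) * ‖u‖ := by
      refine le_trans (abs_real_inner_le_norm _ _) ?_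
      refine mul_le_mul_of_nonneg_right ?_ (norm_nonneg u)
      refine le_trans (norm_add_le _ _) ?_
      linarith [hW0 x, hW0 (x + s • u)]
    have e4 : |f (x + s • u)| ≤ F0 := hF0 _
    calc (1/2) * |⟪w x + w (x + s • u), u⟫_ℝ| * |f (x + s • u)|
        ≤ (1/2) * ((2 * W0) * ‖u‖) * F0 := by
          refine mul_le_mul (mul_le_mul_of_nonneg_left e1 (by norm_num)) e4
            (abs_nonneg _) (by positivity)
      _ = (W0 * F0) * ‖u‖ := by ring
  -- integrability of g s * φ
  have hlinecont : ∀ s : ℝ, Continuous (fun u : E d => x + s • u) :=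
    fun s => continuous_const.add (continuous_id.const_smul s)
  have gcont : ∀ s : ℝ, Continuous (fun u => g s u) := by
    intro s
    exact (continuous_const.mul (Continuous.inner
      (continuous_const.add (hwcont.comp (hlinecont s))) continuous_id)).mul
      (hfcont.comp (hlinecont s))
  have int_gφ : ∀ s : ℝ, Integrable (fun u : E d => g s u * φ u) := by
    intro s
    refine ((phi_int d 1 h_nonneg h_cont hc h_decay).const_mul (W0 * F0)).mono'
      ((gcont s).mul φcont).aestronglyMeasurable (Eventually.of_forall fun u => ?_)
    rw [Real.norm_eq_abs, abs_mul, abs_of_nonneg (h_nonneg _)]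
    calc |g s u| * φ u ≤ ((W0 * F0) * ‖u‖) * φ u :=
        mul_le_mul_of_nonneg_right (hgbound s u) (h_nonneg _)
      _ = (W0 * F0) * (‖u‖ ^ 1 * φ u) := by ring
  -- odd part integrates to zero
  have odd0 : ∫ u : E d, g 0 u * φ u = 0 := by
    have hneg := integral_neg_eq_self (fun u : E d => g 0 u * φ u) volume
    have hodd : (fun u : E d => g 0 (-u) * φ (-u)) = fun u => -(g 0 u * φ u) := by
      funext u
      simp only [hg, hφ, zero_smul, add_zero, inner_neg_right, norm_neg]
      ring
    rw [show (fun u : E d => g 0 (-u) * φ (-u)) = _ from hodd] at hneg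
    rw [integral_neg] at hneg
    linarith
  -- limit integrand
  set L : E d → ℝ := fun u => (1/2) * (⟪w x + w x, u⟫_ℝ * (fderiv ℝ f x) u
      + ⟪(fderiv ℝ w x) u, u⟫_ℝ * f x) with hLdef
  have hL0 : ∀ u, g' 0 u = L u := by
    intro u
    simp only [hg', hLdef, zero_smul, add_zero]
  -- dominated convergence
  have Φlim : Tendsto (fun s : ℝ => ∫ u : E d, s⁻¹ * ((g s u - g 0 u) * φ u))
      (𝓝[>] (0:ℝ)) (𝓝 (∫ u : E d, L u * φ u)) := by
    refine tendsto_integral_filter_of_dominated_convergence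
      (bound := fun u : E d => K * (‖u‖ ^ 2 * φ u)) ?_ ?_ ?_ ?_
    · refine Eventually.of_forall fun s => ?_
      exact (continuous_const.mul (((gcont s).sub (gcont 0)).mul φcont)).aestronglyMeasurable
    · filter_upwards [self_mem_nhdsWithin] with s hs
      refine Eventually.of_forall fun u => ?_
      have hs0 : (0:ℝ) < s := hs
      rw [Real.norm_eq_abs, abs_mul, abs_mul, abs_of_nonneg (h_nonneg _), abs_inv,
        abs_of_pos hs0]
      calc s⁻¹ * (|g s u - g 0 u| * φ u)
          ≤ s⁻¹ * (((K * ‖u‖ ^ 2) * s) * φ u) := by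
            refine mul_le_mul_of_nonneg_left ?_ (by positivity)
            refine mul_le_mul_of_nonneg_right ?_ (h_nonneg _)
            have := hMVT s u
            rwa [abs_of_pos hs0] at this
        _ = K * (‖u‖ ^ 2 * φ u) := by field_simp
    · exact (phi_int d 2 h_nonneg h_cont hc h_decay).const_mul K
    · refine Eventually.of_forall fun u => ?_
      have hslope := hasDerivAt_iff_tendsto_slope.1 (hasderiv 0 u)
      have hmono : 𝓝[>] (0:ℝ) ≤ 𝓝[{(0:ℝ)}ᶜ] 0 :=
        nhdsWithin_mono 0 (fun y hy => Set.mem_compl_singleton_iff.2 (ne_of_gt hy))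
      have h2 := (hslope.mono_left hmono).mul_const (φ u)
      rw [hL0 u] at h2
      refine Tendsto.congr (fun s => ?_) h2
      rw [slope_def_field]
      field_simp
      simp only [sub_zero]
  -- change of variables identity
  have key : ∀ ε : ℝ, ε ∈ Ioi (0:ℝ) →
      ε⁻¹ * ∫ y, aker d h w ε x y * f y
        = ∫ u : E d, (Real.sqrt ε)⁻¹ * ((g (Real.sqrt ε) u - g 0 u) * φ u) := by
    intro ε hε
    have hε0 : (0:ℝ) < ε := hε
    set s : ℝ := Real.sqrt ε with hsdef
    have hs0 : 0 < s := Real.sqrt_pos.2 hε0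
    have hs2 : s ^ 2 = ε := Real.sq_sqrt hε0.le
    have step1 : ∫ y, aker d h w ε x y * f y
        = ∫ v : E d, aker d h w ε x (x + v) * f (x + v) :=
      (integral_add_left_eq_self (fun y => aker d h w ε x y * f y) x).symm
    have step2 := Measure.integral_comp_smul (volume : Measure (E d))
      (fun v : E d => aker d h w ε x (x + v) * f (x + v)) s
    rw [hd_fr] at step2
    have habs : |((s : ℝ) ^ d)⁻¹| = ((s:ℝ) ^ d)⁻¹ := abs_of_pos (by positivity)
    rw [habs, smul_eq_mul] at step2
    have hsd : (0:ℝ) < s ^ d := by positivity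
    have step2' : ∫ v : E d, aker d h w ε x (x + v) * f (x + v)
        = s ^ d * ∫ u : E d, aker d h w ε x (x + s • u) * f (x + s • u) := by
      rw [step2]; field_simp
    have hpt : ∀ u : E d, aker d h w ε x (x + s • u) * f (x + s • u)
        = (s * ε ^ (-(d:ℝ)/2)) * (g s u * φ u) := by
      intro u
      have h1 : (x + s • u) - x = s • u := add_sub_cancel_left x (s • u)
      have h2 : ‖s • u‖ ^ 2 / ε = ‖u‖ ^ 2 := by
        rw [norm_smul, Real.norm_eq_abs, mul_pow, sq_abs, hs2]
        field_simp
      rw [aker, hker, h1, real_inner_smul_right, h2]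
      simp only [hg, hφ]
      ring
    have hrpow : ε ^ (-(d:ℝ)/2) = (s ^ d)⁻¹ := by
      calc ε ^ (-(d:ℝ)/2) = (s ^ (2:ℕ) : ℝ) ^ (-(d:ℝ)/2) := by rw [hs2]
        _ = (s ^ ((2:ℕ):ℝ)) ^ (-(d:ℝ)/2) := by rw [Real.rpow_natCast]
        _ = s ^ (((2:ℕ):ℝ) * (-(d:ℝ)/2)) := by rw [← Real.rpow_mul hs0.le]
        _ = s ^ (-(d:ℝ)) := by rw [show ((2:ℕ):ℝ) * (-(d:ℝ)/2) = -(d:ℝ) by push_cast; ring]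
        _ = (s ^ ((d:ℕ):ℝ))⁻¹ := by rw [Real.rpow_neg hs0.le]
        _ = (s ^ d)⁻¹ := by rw [Real.rpow_natCast]
    have heps : ε = s * s := by rw [← hs2]; ring
    calc ε⁻¹ * ∫ y, aker d h w ε x y * f y
        = ε⁻¹ * (s ^ d * ∫ u : E d, aker d h w ε x (x + s • u) * f (x + s • u)) := by
          rw [step1, step2']
      _ = ε⁻¹ * (s ^ d * ((s * ε ^ (-(d:ℝ)/2)) * ∫ u : E d, g s u * φ u)) := by
          rw [show (fun u : E d => aker d h w ε x (x + s • u) * f (x + s • u))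
              = fun u => (s * ε ^ (-(d:ℝ)/2)) * (g s u * φ u) from funext hpt]
          rw [integral_const_mul]
      _ = (ε⁻¹ * (s ^ d * (s * (s ^ d)⁻¹))) * ∫ u : E d, g s u * φ u := by
          rw [hrpow]; ring
      _ = s⁻¹ * ∫ u : E d, g s u * φ u := by
          have hconst : ε⁻¹ * (s ^ d * (s * (s ^ d)⁻¹)) = s⁻¹ := by
            rw [heps]; field_simp
          rw [hconst]
      _ = s⁻¹ * ∫ u : E d, (g s u - g 0 u) * φ u := by
          congr 1
          have hsub : ∫ u : E d, (g s u - g 0 u) * φ u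
              = (∫ u : E d, g s u * φ u) - ∫ u : E d, g 0 u * φ u := by
            simp_rw [sub_mul]
            exact integral_sub (int_gφ s) (int_gφ 0)
          rw [hsub, odd0, sub_zero]
      _ = ∫ u : E d, s⁻¹ * ((g s u - g 0 u) * φ u) := (integral_const_mul _ _).symm
  -- sqrt tendsto
  have hsq : Tendsto Real.sqrt (𝓝[>] (0:ℝ)) (𝓝[>] (0:ℝ)) := by
    apply tendsto_nhdsWithin_of_tendsto_nhds_of_eventually_within
    · have h1 : Tendsto Real.sqrt (𝓝 0) (𝓝 (Real.sqrt 0)) :=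
        Real.continuous_sqrt.tendsto 0
      rw [Real.sqrt_zero] at h1
      exact h1.mono_left nhdsWithin_le_nhds
    · filter_upwards [self_mem_nhdsWithin] with ε hε
      exact Real.sqrt_pos.2 hε
  have hcomp := Φlim.comp hsq
  -- identify the limit value
  have hval : ∫ u : E d, L u * φ u
      = m₂ * (⟪w x, gradient f x⟫_ℝ + (1 / 2) * f x * divg w x) := by
    set A : E d →L[ℝ] E d := fderiv ℝ w x with hA
    have hgrad : ∀ u : E d, ⟪gradient f x, u⟫_ℝ = (fderiv ℝ f x) u := by
      intro u
      have : gradient f x = (InnerProductSpace.toDual ℝ (E d)).symm (fderiv ℝ f x) := rfl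
      rw [this, InnerProductSpace.toDual_symm_apply]
    have hsplit : ∀ u : E d, L u * φ u
        = ⟪w x, u⟫_ℝ * ⟪gradient f x, u⟫_ℝ * φ u
          + ((1/2) * f x) * (⟪A u, u⟫_ℝ * φ u) := by
      intro u
      rw [hLdef]
      rw [hgrad u]
      simp only [inner_add_left, hA]
      ring
    have int1 : Integrable (fun u : E d => ⟪w x, u⟫_ℝ * ⟪gradient f x, u⟫_ℝ * φ u) := by
      refine ((phi_int d 2 h_nonneg h_cont hc h_decay).const_mul
        (‖w x‖ * ‖gradient f x‖)).mono'
        (((Continuous.inner continuous_const continuous_id).mul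
          (Continuous.inner continuous_const continuous_id)).mul
          φcont).aestronglyMeasurable (Eventually.of_forall fun u => ?_)
      rw [Real.norm_eq_abs, abs_mul, abs_mul, abs_of_nonneg (h_nonneg _)]
      have h3 : |⟪w x, u⟫_ℝ| * |⟪gradient f x, u⟫_ℝ| ≤ (‖w x‖ * ‖u‖) * (‖gradient f x‖ * ‖u‖) :=
        mul_le_mul (abs_real_inner_le_norm _ _) (abs_real_inner_le_norm _ _)
          (abs_nonneg _) (by positivity)
      calc |⟪w x, u⟫_ℝ| * |⟪gradient f x, u⟫_ℝ| * φ u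
          ≤ ((‖w x‖ * ‖u‖) * (‖gradient f x‖ * ‖u‖)) * φ u :=
            mul_le_mul_of_nonneg_right h3 (h_nonneg _)
        _ = (‖w x‖ * ‖gradient f x‖) * (‖u‖ ^ 2 * φ u) := by ring
    have int2 : Integrable (fun u : E d => ⟪A u, u⟫_ℝ * φ u) := by
      refine ((phi_int d 2 h_nonneg h_cont hc h_decay).const_mul ‖A‖).mono'
        ((Continuous.inner A.continuous continuous_id).mul φcont).aestronglyMeasurable
        (Eventually.of_forall fun u => ?_)
      rw [Real.norm_eq_abs, abs_mul, abs_of_nonneg (h_nonneg _)]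
      have h3 : |⟪A u, u⟫_ℝ| ≤ ‖A‖ * ‖u‖ * ‖u‖ := by
        refine le_trans (abs_real_inner_le_norm _ _) ?_
        exact mul_le_mul_of_nonneg_right (A.le_opNorm u) (norm_nonneg u)
      calc |⟪A u, u⟫_ℝ| * φ u ≤ (‖A‖ * ‖u‖ * ‖u‖) * φ u :=
            mul_le_mul_of_nonneg_right h3 (h_nonneg _)
        _ = ‖A‖ * (‖u‖ ^ 2 * φ u) := by ring
    calc ∫ u : E d, L u * φ u
        = ∫ u : E d, (⟪w x, u⟫_ℝ * ⟪gradient f x, u⟫_ℝ * φ u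
            + ((1/2) * f x) * (⟪A u, u⟫_ℝ * φ u)) := by
          exact integral_congr_ae (Eventually.of_forall hsplit)
      _ = (∫ u : E d, ⟪w x, u⟫_ℝ * ⟪gradient f x, u⟫_ℝ * φ u)
            + ((1/2) * f x) * ∫ u : E d, ⟪A u, u⟫_ℝ * φ u := by
          rw [integral_add int1 (int2.const_mul _), integral_const_mul]
      _ = (∫ u : E d, (u ⟨0, hd⟩) ^ 2 * h (‖u‖ ^ 2)) * ⟪w x, gradient f x⟫_ℝ
            + ((1/2) * f x) * ((∫ u : E d, (u ⟨0, hd⟩) ^ 2 * h (‖u‖ ^ 2))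
              * ∑ i, A (EuclideanSpace.single i 1) i) := by
          simp only [hφ]
          rw [moment_bilinear h_nonneg h_cont hc h_decay hd,
            moment_quad h_nonneg h_cont hc h_decay hd]
      _ = m₂ * (⟪w x, gradient f x⟫_ℝ + (1 / 2) * f x * divg w x) := by
          rw [← hm₂, divg, hA]
          ring
  rw [← hval]
  refine Tendsto.congr' ?_ hcomp
  filter_upwards [self_mem_nhdsWithin] with ε hε
  exact (key ε hε).symm
end
end

section
/- For every bounded continuous function f : ℝ^d → ℝ and every x ∈ ℝ^d, lim_{ε→0⁺} ∫ a_ε(x,y)·f(y) dy = 0. -/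
open MeasureTheory Filter Set
open scoped InnerProductSpace Topology

noncomputable section

lemma integrable_gauss (d : ℕ) {b : ℝ} (hb : 0 < b) :
    Integrable (fun v : E d => Real.exp (-b * ‖v‖ ^ 2)) := by
  have h := (GaussianFourier.integrable_cexp_neg_mul_sq_norm_add
    (b := (b : ℂ)) (by simpa using hb) 0 (0 : E d)).norm
  refine h.congr ?_
  filter_upwards with v
  rw [Complex.norm_exp]
  norm_num
  left; rw [← Complex.ofReal_pow]; exact Complex.ofReal_re _

lemma integrable_norm_gauss (d : ℕ) {b : ℝ} (hb : 0 < b) :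
    Integrable (fun v : E d => ‖v‖ * Real.exp (-b * ‖v‖ ^ 2)) := by
  have hmeas : AEStronglyMeasurable (fun v : E d => ‖v‖ * Real.exp (-b * ‖v‖ ^ 2)) volume :=
    (continuous_norm.mul (Real.continuous_exp.comp (by fun_prop))).aestronglyMeasurable
  refine Integrable.mono' ((integrable_gauss d hb).add
    (((integrable_gauss d (half_pos hb)).const_mul (2 / b)))) hmeas ?_
  filter_upwards with v
  have h1 : ‖v‖ ≤ 1 + ‖v‖ ^ 2 := by nlinarith [norm_nonneg v, sq_nonneg (‖v‖ - 1)]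
  have h2 : ‖v‖ ^ 2 * Real.exp (-(b / 2) * ‖v‖ ^ 2) ≤ 2 / b := by
    have h3 : (b / 2) * ‖v‖ ^ 2 ≤ Real.exp ((b / 2) * ‖v‖ ^ 2) := by
      have := Real.add_one_le_exp ((b / 2) * ‖v‖ ^ 2); linarith
    have he : (0:ℝ) < Real.exp ((b / 2) * ‖v‖ ^ 2) := Real.exp_pos _
    rw [neg_mul, Real.exp_neg]
    have h4 := mul_le_mul_of_nonneg_right h3 (inv_nonneg.2 he.le)
    rw [mul_inv_cancel₀ he.ne'] at h4
    have hb' : (0:ℝ) < 2 / b := by positivity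
    have h5 := mul_le_mul_of_nonneg_left h4 hb'.le
    have h6 : 2 / b * (b / 2 * ‖v‖ ^ 2 * (Real.exp (b / 2 * ‖v‖ ^ 2))⁻¹)
        = ‖v‖ ^ 2 * (Real.exp (b / 2 * ‖v‖ ^ 2))⁻¹ := by field_simp
    rw [h6] at h5
    linarith
  have key : ‖v‖ * Real.exp (-b * ‖v‖ ^ 2)
      ≤ Real.exp (-b * ‖v‖ ^ 2) + 2 / b * Real.exp (-(b / 2) * ‖v‖ ^ 2) := by
    have he1 : (0:ℝ) < Real.exp (-b * ‖v‖ ^ 2) := Real.exp_pos _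
    have hsplit : Real.exp (-b * ‖v‖ ^ 2)
        = Real.exp (-(b / 2) * ‖v‖ ^ 2) * Real.exp (-(b / 2) * ‖v‖ ^ 2) := by
      rw [← Real.exp_add]; ring_nf
    calc ‖v‖ * Real.exp (-b * ‖v‖ ^ 2) ≤ (1 + ‖v‖ ^ 2) * Real.exp (-b * ‖v‖ ^ 2) :=
          mul_le_mul_of_nonneg_right h1 he1.le
      _ = Real.exp (-b * ‖v‖ ^ 2)
          + ‖v‖ ^ 2 * Real.exp (-(b / 2) * ‖v‖ ^ 2) * Real.exp (-(b / 2) * ‖v‖ ^ 2) := by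
          rw [hsplit]; ring
      _ ≤ Real.exp (-b * ‖v‖ ^ 2) + 2 / b * Real.exp (-(b / 2) * ‖v‖ ^ 2) := by
          gcongr
  have hnn : (0:ℝ) ≤ ‖v‖ * Real.exp (-b * ‖v‖ ^ 2) := by positivity
  simpa [Real.norm_eq_abs, abs_of_nonneg hnn] using key

/-- For every bounded continuous `f` and every `x`,
`lim_{ε→0⁺} ∫ a_ε(x,y) f(y) dy = 0`. -/
theorem stmt3
    (d : ℕ) (hd : 0 < d)
    (h : ℝ → ℝ) (h_nonneg : ∀ u, 0 ≤ h u) (h_cont : Continuous h)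
    (C c : ℝ) (hC : 0 < C) (hc : 0 < c)
    (h_decay : ∀ u : ℝ, 0 ≤ u → h u ≤ C * Real.exp (-c * u))
    (w : E d → E d) (hw : ContDiff ℝ (⊤ : ℕ∞) w)
    (hw_bdd : ∀ n : ℕ, ∃ M, ∀ x, ‖iteratedFDeriv ℝ n w x‖ ≤ M)
    (f : E d → ℝ) (hf_cont : Continuous f) (hf_bdd : ∃ M, ∀ y, |f y| ≤ M)
    (x : E d) :
    Tendsto (fun ε : ℝ => ∫ y, aker d h w ε x y * f y) (𝓝[>] (0 : ℝ)) (𝓝 0) := by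
  obtain ⟨Mw0, hMw0⟩ := hw_bdd 0
  set Mw : ℝ := max Mw0 0 with hMwdef
  have hMw : ∀ y, ‖w y‖ ≤ Mw := fun y =>
    le_max_of_le_left (by simpa [norm_iteratedFDeriv_zero] using hMw0 y)
  have hMwnn : (0:ℝ) ≤ Mw := le_max_right _ _
  obtain ⟨Mf0, hMf0⟩ := hf_bdd
  set Mf : ℝ := max Mf0 0 with hMfdef
  have hMf : ∀ y, |f y| ≤ Mf := fun y => (hMf0 y).trans (le_max_left _ _)
  have hMfnn : (0:ℝ) ≤ Mf := le_max_right _ _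
  set A : ℝ := ∫ z : E d, ‖z‖ * Real.exp (-c * ‖z‖ ^ 2) with hA
  have hAnn : 0 ≤ A := integral_nonneg fun z => by positivity
  set K : ℝ := Mw * Mf * C * A with hK
  have key : ∀ ε : ℝ, 0 < ε → ‖∫ y, aker d h w ε x y * f y‖ ≤ K * Real.sqrt ε := by
    intro ε hε
    set s : ℝ := Real.sqrt ε with hs
    have hs0 : 0 < s := Real.sqrt_pos.2 hε
    have hs2 : s ^ 2 = ε := Real.sq_sqrt hε.le
    set F : E d → ℝ := fun z => ‖z‖ * Real.exp (-(c/ε) * ‖z‖ ^ 2) with hF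
    have hIF : Integrable F := integrable_norm_gauss d (div_pos hc hε)
    have hI : Integrable (fun y : E d => F (y - x)) := hIF.comp_sub_right x
    set B : E d → ℝ := fun y => (Mw * Mf * C) * (ε ^ (-(d:ℝ)/2) * F (y - x)) with hB
    have hBint : Integrable B := (hI.const_mul _).const_mul _
    have hbd : ∀ y, ‖aker d h w ε x y * f y‖ ≤ B y := by
      intro y
      have hrp : (0:ℝ) < ε ^ (-(d:ℝ)/2) := Real.rpow_pos_of_pos hε _
      have e1 : |(1:ℝ)/2 * ⟪w x + w y, y - x⟫_ℝ| ≤ Mw * ‖y - x‖ := by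
        rw [abs_mul]
        have := abs_real_inner_le_norm (w x + w y) (y - x)
        have h2 : ‖w x + w y‖ ≤ 2 * Mw := by
          calc ‖w x + w y‖ ≤ ‖w x‖ + ‖w y‖ := norm_add_le _ _
            _ ≤ 2 * Mw := by have := hMw x; have := hMw y; linarith
        have : |⟪w x + w y, y - x⟫_ℝ| ≤ 2 * Mw * ‖y - x‖ := by
          refine this.trans ?_
          exact mul_le_mul_of_nonneg_right h2 (norm_nonneg _)
        rw [abs_div, abs_one, abs_two]
        linarith
      have e2 : |hker d h ε x y| ≤ ε ^ (-(d:ℝ)/2) * (C * Real.exp (-(c/ε) * ‖y - x‖ ^ 2)) := by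
        unfold hker
        rw [abs_mul, abs_of_pos hrp, abs_of_nonneg (h_nonneg _)]
        have hu : (0:ℝ) ≤ ‖y - x‖ ^ 2 / ε := by positivity
        have := h_decay _ hu
        have heq : -c * (‖y - x‖ ^ 2 / ε) = -(c/ε) * ‖y - x‖ ^ 2 := by ring
        rw [heq] at this
        exact mul_le_mul_of_nonneg_left this hrp.le
      have e3 : |f y| ≤ Mf := hMf y
      rw [Real.norm_eq_abs]
      unfold aker
      rw [abs_mul, abs_mul]
      calc |(1:ℝ)/2 * ⟪w x + w y, y - x⟫_ℝ| * |hker d h ε x y| * |f y|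
          ≤ (Mw * ‖y - x‖) * (ε ^ (-(d:ℝ)/2) * (C * Real.exp (-(c/ε) * ‖y - x‖ ^ 2))) * Mf := by
            gcongr <;> positivity
        _ = B y := by simp only [hB, hF]; ring
    have step1 : ‖∫ y, aker d h w ε x y * f y‖ ≤ ∫ y, B y :=
      norm_integral_le_of_norm_le hBint (Eventually.of_forall hbd)
    have hcomp : ∫ z : E d, F (s • z) = s * A := by
      rw [show (fun z : E d => F (s • z)) = fun z : E d => s * (‖z‖ * Real.exp (-c * ‖z‖ ^ 2))
        from ?_, integral_const_mul]
      ext z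
      simp only [hF, norm_smul, Real.norm_eq_abs, abs_of_pos hs0]
      rw [mul_pow, hs2]
      have : -(c/ε) * (ε * ‖z‖ ^ 2) = -c * ‖z‖ ^ 2 := by field_simp
      rw [this]; ring
    have hstretch : ∫ z : E d, F z = s ^ d * (s * A) := by
      have h1 := MeasureTheory.Measure.integral_comp_smul_of_nonneg
        (volume : Measure (E d)) F s (hR := hs0.le)
      rw [hcomp, finrank_euclideanSpace_fin, smul_eq_mul] at h1
      rw [h1, mul_inv_cancel_left₀ (by positivity : (s:ℝ) ^ d ≠ 0)]
    have htrans : ∫ y : E d, F (y - x) = ∫ z : E d, F z := integral_sub_right_eq_self F x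
    have hBval : ∫ y, B y = K * s := by
      rw [hB]
      simp only
      rw [integral_const_mul, integral_const_mul, htrans, hstretch]
      have hpow : ε ^ (-(d:ℝ)/2) * s ^ d = 1 := by
        have hsd : s ^ d = ε ^ ((d:ℝ)/2) := by
          rw [hs, Real.sqrt_eq_rpow, ← Real.rpow_natCast (ε ^ ((1:ℝ)/2)) d,
            ← Real.rpow_mul hε.le]
          ring_nf
        rw [hsd, ← Real.rpow_add hε, show -(d:ℝ)/2 + (d:ℝ)/2 = 0 by ring, Real.rpow_zero]
      calc Mw * Mf * C * (ε ^ (-(d:ℝ)/2) * (s ^ d * (s * A)))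
          = (ε ^ (-(d:ℝ)/2) * s ^ d) * (Mw * Mf * C * A * s) := by ring
        _ = K * s := by rw [hpow, hK]; ring
    rw [hBval] at step1
    exact step1
  have hg : Tendsto (fun ε : ℝ => K * Real.sqrt ε) (𝓝[>] (0:ℝ)) (𝓝 0) := by
    have h1 : Tendsto (fun ε : ℝ => K * Real.sqrt ε) (𝓝 0) (𝓝 (K * Real.sqrt 0)) :=
      (Real.continuous_sqrt.continuousAt (x := (0:ℝ))).const_mul K
    simpa using h1.mono_left nhdsWithin_le_nhds
  refine squeeze_zero_norm' ?_ hg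
  filter_upwards [self_mem_nhdsWithin] with ε hε using key ε hε
end
end

section
/- There exists a constant C' > 0 (depending only on h, d, and the bounds on f) such that for all x ∈ ℝ^d and all ε ∈ (0,1]: | ∫ h_ε(x,y)·( f(y) − f(x) − ∇f(x)·(y−x) − ½·⟨∇²f(x)(y−x), y−x⟩ ) dy | ≤ C'·ε^{3/2}; i.e. the second-order Taylor remainder integrated against the rescaled kernel is O(ε^{3/2}), uniformly in x. -/
open MeasureTheory Filter Set
open scoped InnerProductSpace Topology

noncomputable section

/-! ### Auxiliary lemmas -/

lemma aux_cube_le (a t : ℝ) (ha : 0 < a) (ht : 0 ≤ t) :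
    t ^ 3 ≤ (1 + 4 / a ^ 2) * Real.exp (a * t ^ 2) := by
  have h1 : (1 : ℝ) ≤ Real.exp (a * t ^ 2) := Real.one_le_exp (by positivity)
  have h2 : a * t ^ 2 / 2 + 1 ≤ Real.exp (a * t ^ 2 / 2) := Real.add_one_le_exp _
  have h3 : (a * t ^ 2 / 2) ^ 2 ≤ Real.exp (a * t ^ 2) := by
    have : Real.exp (a * t ^ 2) = Real.exp (a * t ^ 2 / 2) ^ 2 := by
      rw [← Real.exp_nat_mul]; ring_nf
    rw [this]
    have h4 : 0 ≤ a * t ^ 2 / 2 := by positivity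
    nlinarith [Real.exp_pos (a * t ^ 2 / 2)]
  -- so t^4 ≤ (4/a^2) * exp(a t^2)
  have h5 : t ^ 4 ≤ 4 / a ^ 2 * Real.exp (a * t ^ 2) := by
    rw [div_mul_eq_mul_div, le_div_iff₀ (by positivity)]
    nlinarith [h3]
  have h6 : t ^ 3 ≤ 1 + t ^ 4 := by nlinarith [sq_nonneg (t ^ 2 - t), sq_nonneg t, sq_nonneg (t - 1)]
  calc t ^ 3 ≤ 1 + t ^ 4 := h6
    _ ≤ Real.exp (a * t ^ 2) + 4 / a ^ 2 * Real.exp (a * t ^ 2) := add_le_add h1 h5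
    _ = (1 + 4 / a ^ 2) * Real.exp (a * t ^ 2) := by ring

lemma integrable_gauss_E {d : ℕ} {b : ℝ} (hb : 0 < b) :
    Integrable (fun v : E d => Real.exp (-b * ‖v‖ ^ 2)) := by
  have h := (GaussianFourier.integrable_cexp_neg_mul_sq_norm_add (V := E d)
    (b := (b : ℂ)) (by simpa using hb) 0 0).norm
  have : (fun v : E d => ‖Complex.exp (-(b : ℂ) * (‖v‖ : ℂ) ^ 2 + 0 * (⟪(0 : E d), v⟫_ℝ : ℂ))‖)
      = fun v : E d => Real.exp (-b * ‖v‖ ^ 2) := by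
    funext v
    rw [Complex.norm_exp]
    congr 1
    have : -(b : ℂ) * (‖v‖ : ℂ) ^ 2 + 0 * (⟪(0 : E d), v⟫_ℝ : ℂ)
        = ((-b * ‖v‖ ^ 2 : ℝ) : ℂ) := by push_cast; ring
    rw [this, Complex.ofReal_re]
  rwa [this] at h

lemma integrable_cube_gauss {d : ℕ} {b : ℝ} (hb : 0 < b) :
    Integrable (fun v : E d => ‖v‖ ^ 3 * Real.exp (-b * ‖v‖ ^ 2)) := by
  have hint := (integrable_gauss_E (d := d) (half_pos hb)).const_mul (1 + 4 / (b / 2) ^ 2)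
  refine hint.mono' ?_ ?_
  · exact ((continuous_norm.pow 3).mul
      ((Real.continuous_exp.comp (continuous_const.mul (continuous_norm.pow 2))))).aestronglyMeasurable
  · refine Eventually.of_forall fun v => ?_
    have hb2 : 0 < b / 2 := half_pos hb
    have key := aux_cube_le (b / 2) ‖v‖ hb2 (norm_nonneg v)
    have hpos : 0 ≤ Real.exp (-b * ‖v‖ ^ 2) := (Real.exp_pos _).le
    rw [Real.norm_eq_abs, abs_of_nonneg (by positivity)]
    calc ‖v‖ ^ 3 * Real.exp (-b * ‖v‖ ^ 2)
        ≤ ((1 + 4 / (b / 2) ^ 2) * Real.exp (b / 2 * ‖v‖ ^ 2)) * Real.exp (-b * ‖v‖ ^ 2) := by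
          gcongr
      _ = (1 + 4 / (b / 2) ^ 2) * Real.exp (-(b / 2) * ‖v‖ ^ 2) := by
          rw [mul_assoc, ← Real.exp_add]; ring_nf

instance instNACG_E2 (d : ℕ) : NormedAddCommGroup (E d →L[ℝ] E d →L[ℝ] ℝ) := inferInstance

instance instNS_E2 (d : ℕ) : NormedSpace ℝ (E d →L[ℝ] E d →L[ℝ] ℝ) := inferInstance

/-- Second-order Taylor bound from a uniform bound on the third derivative. -/
lemma taylor_bd {d : ℕ} (f : E d → ℝ) (hf : ContDiff ℝ 3 f) (M : ℝ)
    (hM : ∀ z, ‖iteratedFDeriv ℝ 3 f z‖ ≤ M) (x y : E d) :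
    |f y - f x - fderiv ℝ f x (y - x) -
      (1 / 2) * fderiv ℝ (fderiv ℝ f) x (y - x) (y - x)| ≤ M * ‖y - x‖ ^ 3 := by
  set F := fderiv ℝ f with hF
  set B := fderiv ℝ F with hB
  have hM0 : 0 ≤ M := le_trans (norm_nonneg _) (hM x)
  have hfd : Differentiable ℝ f := hf.differentiable (by norm_num)
  have hF2 : ContDiff ℝ 2 F := hf.fderiv_right (by norm_num)
  have hFd : Differentiable ℝ F := hF2.differentiable two_ne_zero
  have hB1 : ContDiff ℝ 1 B := hF2.fderiv_right (by norm_num)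
  have hBd : Differentiable ℝ B := hB1.differentiable one_ne_zero
  have hBnorm : ∀ z, ‖fderiv ℝ B z‖ ≤ M := by
    intro z
    have e1 : ‖fderiv ℝ B z‖ = ‖iteratedFDeriv ℝ 3 f z‖ := by
      calc ‖fderiv ℝ B z‖ = ‖iteratedFDeriv ℝ 0 (fderiv ℝ B) z‖ := norm_iteratedFDeriv_zero.symm
        _ = ‖iteratedFDeriv ℝ 1 B z‖ := norm_iteratedFDeriv_fderiv
        _ = ‖iteratedFDeriv ℝ 2 F z‖ := norm_iteratedFDeriv_fderiv
        _ = ‖iteratedFDeriv ℝ 3 f z‖ := norm_iteratedFDeriv_fderiv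
    rw [e1]; exact hM z
  have hlip : ∀ z w : E d, ‖B z - B w‖ ≤ M * ‖z - w‖ := fun z w =>
    convex_univ.norm_image_sub_le_of_norm_fderiv_le (fun u _ => hBd u)
      (fun u _ => hBnorm u) (mem_univ w) (mem_univ z)
  have hstep2 : ∀ z : E d, ‖F z - F x - B x (z - x)‖ ≤ M * ‖z - x‖ * ‖z - x‖ := by
    intro z
    have hmem : z ∈ Metric.closedBall x ‖z - x‖ := by
      rw [Metric.mem_closedBall, dist_eq_norm]
    have hbound : ∀ w ∈ Metric.closedBall x ‖z - x‖, ‖fderiv ℝ F w - B x‖ ≤ M * ‖z - x‖ := by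
      intro w hw
      rw [Metric.mem_closedBall, dist_eq_norm] at hw
      calc ‖fderiv ℝ F w - B x‖ = ‖B w - B x‖ := rfl
        _ ≤ M * ‖w - x‖ := hlip w x
        _ ≤ M * ‖z - x‖ := by gcongr
    exact (convex_closedBall x ‖z - x‖).norm_image_sub_le_of_norm_fderiv_le'
      (fun w _ => hFd w) hbound (Metric.mem_closedBall_self (norm_nonneg _)) hmem
  have hsymm : ∀ v w : E d, B x v w = B x w v := fun v w =>
    second_derivative_symmetric (f' := F) (fun u => (hfd u).hasFDerivAt)
      (hFd x).hasFDerivAt v w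
  -- derivative of the auxiliary function
  have key : ∀ z : E d, HasFDerivAt
      (fun u => f u - F x (u - x) - (1 / 2) * B x (u - x) (u - x))
      (F z - F x - B x (z - x)) z := by
    intro z
    have h1 : HasFDerivAt f (F z) z := (hfd z).hasFDerivAt
    have hsub : HasFDerivAt (fun u : E d => u - x) (ContinuousLinearMap.id ℝ (E d)) z :=
      (hasFDerivAt_id z).sub_const x
    have h2 : HasFDerivAt (fun u : E d => F x (u - x)) (F x) z := by
      have := (F x).hasFDerivAt.comp z hsub
      simpa [Function.comp_def] using this
    have hA : HasFDerivAt (fun u : E d => B x (u - x)) (B x) z := by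
      have := (B x).hasFDerivAt.comp z hsub
      simpa [Function.comp_def] using this
    have hpair : HasFDerivAt (fun u : E d => (B x (u - x), u - x))
        ((B x).prod (ContinuousLinearMap.id ℝ (E d))) z := HasFDerivAt.prodMk hA hsub
    have hbil := (isBoundedBilinearMap_apply
      (𝕜 := ℝ) (E := E d) (F := ℝ)).hasFDerivAt (B x (z - x), z - x)
    have h3 := hbil.comp z hpair
    have h4 := h3.const_mul (1 / 2 : ℝ)
    have heq : (1 / 2 : ℝ) •
        ((isBoundedBilinearMap_apply (𝕜 := ℝ) (E := E d) (F := ℝ)).deriv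
          (B x (z - x), z - x)).comp ((B x).prod (ContinuousLinearMap.id ℝ (E d)))
        = B x (z - x) := by
      ext v
      simp only [ContinuousLinearMap.smul_apply, ContinuousLinearMap.coe_comp',
        Function.comp_apply, ContinuousLinearMap.prod_apply, ContinuousLinearMap.coe_id',
        id_eq, IsBoundedBilinearMap.deriv_apply, smul_eq_mul]
      rw [hsymm v (z - x)]
      ring
    rw [heq] at h4
    exact (h1.sub h2).sub h4
  -- mean value inequality on the closed ball
  have hmemy : y ∈ Metric.closedBall x ‖y - x‖ := by
    rw [Metric.mem_closedBall, dist_eq_norm]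
  have hbound2 : ∀ z ∈ Metric.closedBall x ‖y - x‖,
      ‖F z - F x - B x (z - x)‖ ≤ M * ‖y - x‖ ^ 2 := by
    intro z hz
    rw [Metric.mem_closedBall, dist_eq_norm] at hz
    calc ‖F z - F x - B x (z - x)‖ ≤ M * ‖z - x‖ * ‖z - x‖ := hstep2 z
      _ ≤ M * ‖y - x‖ * ‖y - x‖ := by gcongr
      _ = M * ‖y - x‖ ^ 2 := by ring
  have main := (convex_closedBall x ‖y - x‖).norm_image_sub_le_of_norm_hasFDerivWithin_le
    (f' := fun z => F z - F x - B x (z - x))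
    (fun z _ => (key z).hasFDerivWithinAt) hbound2
    (Metric.mem_closedBall_self (norm_nonneg _)) hmemy
  simp only [sub_self, map_zero, ContinuousLinearMap.zero_apply, mul_zero, sub_zero] at main
  calc |f y - f x - F x (y - x) - (1 / 2) * B x (y - x) (y - x)|
      = ‖f y - F x (y - x) - (1 / 2) * B x (y - x) (y - x) - f x‖ := by
        rw [Real.norm_eq_abs]; congr 1; ring
    _ ≤ M * ‖y - x‖ ^ 2 * ‖y - x‖ := main
    _ = M * ‖y - x‖ ^ 3 := by ring

/-- Scaling identity for the Gaussian-type integral. -/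
lemma scaled_integral {d : ℕ} (c ε : ℝ) (hε : 0 < ε) :
    ∫ z : E d, ‖z‖ ^ 3 * Real.exp (-(c / ε) * ‖z‖ ^ 2)
      = ε ^ ((d : ℝ) / 2) * ε ^ ((3 : ℝ) / 2) *
        ∫ w : E d, ‖w‖ ^ 3 * Real.exp (-c * ‖w‖ ^ 2) := by
  set s := ε ^ ((1 : ℝ) / 2) with hs
  have hs0 : 0 < s := Real.rpow_pos_of_pos hε _
  have hsq : s ^ 2 = ε := by
    rw [hs, ← Real.rpow_natCast (ε ^ ((1 : ℝ) / 2)) 2, ← Real.rpow_mul hε.le]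
    norm_num
  have hsd : s ^ d = ε ^ ((d : ℝ) / 2) := by
    rw [hs, ← Real.rpow_natCast (ε ^ ((1 : ℝ) / 2)) d, ← Real.rpow_mul hε.le]
    congr 1; ring
  have hs3 : s ^ 3 = ε ^ ((3 : ℝ) / 2) := by
    rw [hs, ← Real.rpow_natCast (ε ^ ((1 : ℝ) / 2)) 3, ← Real.rpow_mul hε.le]
    congr 1; norm_num
  have hcomp := MeasureTheory.Measure.integral_comp_smul_of_nonneg (μ := volume)
    (fun z : E d => ‖z‖ ^ 3 * Real.exp (-(c / ε) * ‖z‖ ^ 2)) s (hR := hs0.le)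
  have hpt : ∀ w : E d, ‖(s • w : E d)‖ ^ 3 * Real.exp (-(c / ε) * ‖(s • w : E d)‖ ^ 2)
      = s ^ 3 * (‖w‖ ^ 3 * Real.exp (-c * ‖w‖ ^ 2)) := by
    intro w
    rw [norm_smul, Real.norm_eq_abs, abs_of_pos hs0]
    have h1 : (s * ‖w‖) ^ 2 = ε * ‖w‖ ^ 2 := by rw [mul_pow, hsq]
    have h2 : -(c / ε) * (ε * ‖w‖ ^ 2) = -c * ‖w‖ ^ 2 := by field_simp
    rw [mul_pow, h1, h2]
    ring
  simp_rw [hpt] at hcomp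
  rw [integral_const_mul] at hcomp
  rw [finrank_euclideanSpace_fin] at hcomp
  -- hcomp : s^3 * ∫ w, ... = (s ^ d)⁻¹ • ∫ z, ...
  have hsdpos : (0 : ℝ) < s ^ d := pow_pos hs0 d
  rw [smul_eq_mul] at hcomp
  have := congrArg (fun t => s ^ d * t) hcomp
  simp only [← mul_assoc, mul_inv_cancel₀ hsdpos.ne', one_mul] at this
  rw [← this, hsd, hs3]

/-- The second-order Taylor remainder integrated against the rescaled
kernel is `O(ε^{3/2})`, uniformly in `x`. -/
theorem stmt16
    (d : ℕ) (hd : 0 < d)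
    (h : ℝ → ℝ) (h_nonneg : ∀ u, 0 ≤ h u) (h_cont : Continuous h)
    (C c : ℝ) (hC : 0 < C) (hc : 0 < c)
    (h_decay : ∀ u : ℝ, 0 ≤ u → h u ≤ C * Real.exp (-c * u))
    (f : E d → ℝ) (hf : ContDiff ℝ 3 f)
    (hf_bdd : ∀ n : ℕ, n ≤ 3 → ∃ M, ∀ x, ‖iteratedFDeriv ℝ n f x‖ ≤ M)
 :
    ∃ C' > 0, ∀ x : E d, ∀ ε : ℝ, ε ∈ Ioc (0 : ℝ) 1 →
      |∫ y, hker d h ε x y * (f y - f x - fderiv ℝ f x (y - x) -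
        (1 / 2) * fderiv ℝ (fderiv ℝ f) x (y - x) (y - x))| ≤ C' * ε ^ ((3 : ℝ) / 2) := by
  obtain ⟨M, hM⟩ := hf_bdd 3 le_rfl
  have hM0 : 0 ≤ M := le_trans (norm_nonneg _) (hM 0)
  set I := ∫ w : E d, ‖w‖ ^ 3 * Real.exp (-c * ‖w‖ ^ 2) with hI
  have hI0 : 0 ≤ I := integral_nonneg fun w => by positivity
  refine ⟨C * M * I + 1, by positivity, ?_⟩
  rintro x ε ⟨hε, hε1⟩
  set R : E d → ℝ := fun y => f y - f x - fderiv ℝ f x (y - x) -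
    (1 / 2) * fderiv ℝ (fderiv ℝ f) x (y - x) (y - x) with hR
  have hTay : ∀ y, |R y| ≤ M * ‖y - x‖ ^ 3 := fun y => taylor_bd f hf M hM x y
  have hcε : 0 < c / ε := div_pos hc hε
  have hψint : Integrable (fun z : E d => ‖z‖ ^ 3 * Real.exp (-(c / ε) * ‖z‖ ^ 2)) :=
    integrable_cube_gauss hcε
  set K := ε ^ (-(d : ℝ) / 2) * C * M with hK
  set D : E d → ℝ := fun y => K * (‖y - x‖ ^ 3 * Real.exp (-(c / ε) * ‖y - x‖ ^ 2)) with hD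
  have hDint : Integrable D := (hψint.comp_sub_right x).const_mul K
  have hrpow_pos : (0 : ℝ) < ε ^ (-(d : ℝ) / 2) := Real.rpow_pos_of_pos hε _
  have hpw : ∀ y, ‖hker d h ε x y * R y‖ ≤ D y := by
    intro y
    have hu : (0 : ℝ) ≤ ‖y - x‖ ^ 2 / ε := by positivity
    rw [Real.norm_eq_abs, abs_mul]
    have h1 : |hker d h ε x y| ≤ ε ^ (-(d : ℝ) / 2) * (C * Real.exp (-(c / ε) * ‖y - x‖ ^ 2)) := by
      rw [hker, abs_of_nonneg (mul_nonneg hrpow_pos.le (h_nonneg _))]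
      have := h_decay _ hu
      have hexp : Real.exp (-c * (‖y - x‖ ^ 2 / ε)) = Real.exp (-(c / ε) * ‖y - x‖ ^ 2) := by
        congr 1; ring
      calc ε ^ (-(d : ℝ) / 2) * h (‖y - x‖ ^ 2 / ε)
          ≤ ε ^ (-(d : ℝ) / 2) * (C * Real.exp (-c * (‖y - x‖ ^ 2 / ε))) := by
            exact mul_le_mul_of_nonneg_left this hrpow_pos.le
        _ = ε ^ (-(d : ℝ) / 2) * (C * Real.exp (-(c / ε) * ‖y - x‖ ^ 2)) := by rw [hexp]
    calc |hker d h ε x y| * |R y|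
        ≤ (ε ^ (-(d : ℝ) / 2) * (C * Real.exp (-(c / ε) * ‖y - x‖ ^ 2))) *
            (M * ‖y - x‖ ^ 3) :=
          mul_le_mul h1 (hTay y) (abs_nonneg _) (by positivity)
      _ = D y := by rw [hD, hK]; ring
  have hbound : |∫ y, hker d h ε x y * R y| ≤ ∫ y, D y := by
    rw [← Real.norm_eq_abs]
    refine (norm_integral_le_integral_norm _).trans ?_
    exact integral_mono_of_nonneg (Eventually.of_forall fun y => norm_nonneg _) hDint
      (Eventually.of_forall hpw)
  have hDval : ∫ y, D y = C * M * I * ε ^ ((3 : ℝ) / 2) := by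
    rw [hD]
    rw [integral_const_mul]
    have htrans : ∫ y : E d, ‖y - x‖ ^ 3 * Real.exp (-(c / ε) * ‖y - x‖ ^ 2)
        = ∫ z : E d, ‖z‖ ^ 3 * Real.exp (-(c / ε) * ‖z‖ ^ 2) :=
      integral_sub_right_eq_self (fun z : E d => ‖z‖ ^ 3 * Real.exp (-(c / ε) * ‖z‖ ^ 2)) x
    rw [htrans, scaled_integral c ε hε, hK, ← hI]
    have hone : ε ^ (-(d : ℝ) / 2) * ε ^ ((d : ℝ) / 2) = 1 := by
      rw [← Real.rpow_add hε, show -(d : ℝ) / 2 + (d : ℝ) / 2 = 0 by ring, Real.rpow_zero]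
    calc ε ^ (-(d : ℝ) / 2) * C * M * (ε ^ ((d : ℝ) / 2) * ε ^ ((3 : ℝ) / 2) * I)
        = (ε ^ (-(d : ℝ) / 2) * ε ^ ((d : ℝ) / 2)) * (C * M * I * ε ^ ((3 : ℝ) / 2)) := by ring
      _ = C * M * I * ε ^ ((3 : ℝ) / 2) := by rw [hone, one_mul]
  refine le_trans (le_trans hbound (le_of_eq hDval)) ?_
  have hrp : (0 : ℝ) ≤ ε ^ ((3 : ℝ) / 2) := (Real.rpow_pos_of_pos hε _).le
  nlinarith [mul_nonneg (mul_nonneg hC.le hM0) hI0]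

end
end
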